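/- A prime p can be written as p = a² − 5b² with integers a, b if and only if p = 5 or p ≡ 1, 9, 11, or 19 (mod 20). -/

import Mathlib

open Finset

-- no integer solution to X^2 = 5 Y^2 except 0
private lemma no_sqrt5 (X Y : ℤ) (h : X ^ 2 = 5 * Y ^ 2) : Y = 0 := by
  by_contra hY
  have h5 : Irrational (Real.sqrt 5) := by
    simpa using (Nat.Prime.irrational_sqrt (p := 5) (by norm_num))
  have : Real.sqrt 5 = |(X : ℝ) / (Y : ℝ)| := by
    have hYne : (Y : ℝ) ≠ 0 := Int.cast_ne_zero.mpr hY
    rw [abs_div]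
    rw [show (5 : ℝ) = ((X:ℝ)/(Y:ℝ))^2 by field_simp; exact_mod_cast h.symm]
    rw [Real.sqrt_sq_eq_abs, abs_div]
  rw [this] at h5
  rcases abs_choice ((X : ℝ) / (Y : ℝ)) with h' | h' <;> rw [h'] at h5
  · exact h5 ⟨(X : ℚ)/(Y : ℚ), by push_cast; ring⟩
  · exact h5 ⟨-((X : ℚ)/(Y : ℚ)), by push_cast; ring⟩

-- Thue's lemma, pigeonhole
private lemma thue (p : ℕ) (hp : 1 < p) (t : ZMod p) :
    ∃ X Y : ℤ, (X : ZMod p) = t * (Y : ZMod p) ∧ X ^ 2 ≤ p ∧ Y ^ 2 ≤ p ∧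
      ¬(X = 0 ∧ Y = 0) := by
  haveI : NeZero p := ⟨by omega⟩
  set n := Nat.sqrt p with hn
  set s : Finset (ℕ × ℕ) := Finset.range (n+1) ×ˢ Finset.range (n+1) with hs
  have hcard : (Finset.univ : Finset (ZMod p)).card < s.card := by
    rw [hs, Finset.card_product, Finset.card_range]
    rw [Finset.card_univ, ZMod.card]
    have := Nat.lt_succ_sqrt p
    nlinarith [Nat.sqrt_le p]
  obtain ⟨a, has, b, hbs, hab, hfab⟩ :=
    Finset.exists_ne_map_eq_of_card_lt_of_maps_to hcard
      (f := fun q : ℕ × ℕ => (q.1 : ZMod p) - t * (q.2 : ZMod p))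
      (fun x _ => Finset.mem_univ _)
  rw [hs, Finset.mem_product, Finset.mem_range, Finset.mem_range] at has hbs
  refine ⟨(a.1 : ℤ) - b.1, (a.2 : ℤ) - b.2, ?_, ?_, ?_, ?_⟩
  · push_cast
    linear_combination hfab
  · have h1 : ((a.1 : ℤ) - b.1) ^ 2 ≤ (n : ℤ) ^ 2 := by
      have := has.1; have := hbs.1
      have : |(a.1 : ℤ) - b.1| ≤ n := by rw [abs_le]; omega
      nlinarith [abs_nonneg ((a.1 : ℤ) - b.1), sq_abs ((a.1:ℤ) - b.1)]
    have h2 : (n : ℤ) ^ 2 ≤ p := by exact_mod_cast (by nlinarith [Nat.sqrt_le p] : n ^ 2 ≤ p)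
    omega
  · have h1 : ((a.2 : ℤ) - b.2) ^ 2 ≤ (n : ℤ) ^ 2 := by
      have := has.2; have := hbs.2
      have : |(a.2 : ℤ) - b.2| ≤ n := by rw [abs_le]; omega
      nlinarith [abs_nonneg ((a.2 : ℤ) - b.2), sq_abs ((a.2:ℤ) - b.2)]
    have h2 : (n : ℤ) ^ 2 ≤ p := by exact_mod_cast (by nlinarith [Nat.sqrt_le p] : n ^ 2 ≤ p)
    omega
  · rintro ⟨h1, h2⟩
    apply hab
    have : a.1 = b.1 := by omega
    have : a.2 = b.2 := by omega
    exact Prod.ext ‹a.1 = b.1› ‹a.2 = b.2›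


private lemma sq_ne_prime (p : ℕ) (hp : p.Prime) (X : ℤ) : X ^ 2 ≠ (p : ℤ) := by
  intro h
  have hnat : X.natAbs ^ 2 = p := by
    have := congrArg Int.natAbs h
    simpa [Int.natAbs_pow] using this
  rcases hp.eq_one_or_self_of_dvd X.natAbs ⟨X.natAbs, by rw [← hnat]; ring⟩ with h1 | h1
  · rw [h1] at hnat; simpa [← hnat] using hp.one_lt
  · rw [h1] at hnat; nlinarith [hp.one_lt]

theorem stmt_8 (p : ℕ) (hp : p.Prime) :
    (∃ a b : ℤ, (p : ℤ) = a ^ 2 - 5 * b ^ 2) ↔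
    (p = 5 ∨ p % 20 = 1 ∨ p % 20 = 9 ∨ p % 20 = 11 ∨ p % 20 = 19) := by
  constructor
  · rintro ⟨a, b, hab⟩
    -- mod 5 information
    have h5 : (p : ZMod 5) = (a : ZMod 5) ^ 2 - 5 * (b : ZMod 5) ^ 2 := by
      have := congrArg (fun z : ℤ => (z : ZMod 5)) hab
      push_cast at this; exact this
    have hv5 : p % 5 = ((p : ZMod 5)).val := (ZMod.val_natCast 5 p).symm
    have h5cases : p % 5 = 0 ∨ p % 5 = 1 ∨ p % 5 = 4 := by
      have hd : ∀ x y : ZMod 5, x ^ 2 - 5 * y ^ 2 = 0 ∨ x ^ 2 - 5 * y ^ 2 = 1 ∨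
          x ^ 2 - 5 * y ^ 2 = 4 := by decide
      rcases hd (a : ZMod 5) (b : ZMod 5) with h | h | h <;>
        rw [hv5, h5, h] <;> decide
    -- mod 4 information
    have h4 : (p : ZMod 4) = (a : ZMod 4) ^ 2 - 5 * (b : ZMod 4) ^ 2 := by
      have := congrArg (fun z : ℤ => (z : ZMod 4)) hab
      push_cast at this; exact this
    have hv4 : p % 4 = ((p : ZMod 4)).val := (ZMod.val_natCast 4 p).symm
    have h4cases : p % 4 = 0 ∨ p % 4 = 1 ∨ p % 4 = 3 := by
      have hd : ∀ x y : ZMod 4, x ^ 2 - 5 * y ^ 2 = 0 ∨ x ^ 2 - 5 * y ^ 2 = 1 ∨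
          x ^ 2 - 5 * y ^ 2 = 3 := by decide
      rcases hd (a : ZMod 4) (b : ZMod 4) with h | h | h <;>
        rw [hv4, h4, h] <;> decide
    have hp2 : p ≠ 2 := by rintro rfl; omega
    have hodd : p % 2 = 1 := by
      rcases hp.eq_two_or_odd with h | h
      · exact absurd h hp2
      · exact h
    rcases h5cases with h | h
    · left
      have : (5 : ℕ) ∣ p := Nat.dvd_of_mod_eq_zero h
      exact ((Nat.prime_dvd_prime_iff_eq (by norm_num) hp).mp this).symm
    · right; omega
  · intro h
    by_cases hp5 : p = 5
    · exact ⟨5, 2, by rw [hp5]; norm_num⟩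
    have hm : p % 20 = 1 ∨ p % 20 = 9 ∨ p % 20 = 11 ∨ p % 20 = 19 := by
      rcases h with h | h; · exact absurd h hp5
      exact h
    have hp2 : p ≠ 2 := by omega
    have hp3 : p ≠ 3 := by omega
    have hodd : p % 2 = 1 := by omega
    have hp1 : 1 < p := hp.one_lt
    haveI : Fact p.Prime := ⟨hp⟩
    haveI : Fact (Nat.Prime 5) := ⟨by norm_num⟩
    -- 5 is a square mod p
    have hsq : IsSquare ((5 : ℤ) : ZMod p) := by
      have h50 : ((5 : ℤ) : ZMod p) ≠ 0 := by
        rw [Ne, ZMod.intCast_zmod_eq_zero_iff_dvd]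
        intro hdvd
        have h5d : p ∣ 5 := by exact_mod_cast hdvd
        exact hp5 ((Nat.prime_dvd_prime_iff_eq hp (by norm_num)).mp h5d)
      have hpz : ((p : ℤ) : ZMod 5) ≠ 0 := by
        rw [Ne, ZMod.intCast_zmod_eq_zero_iff_dvd]
        intro hdvd
        have h5d : (5 : ℕ) ∣ p := by exact_mod_cast hdvd
        exact hp5 ((Nat.prime_dvd_prime_iff_eq (by norm_num) hp).mp h5d).symm
      have hps : IsSquare (((p : ℤ)) : ZMod 5) := by
        have hc : ((p : ℤ) : ZMod 5) = ((p % 20 : ℕ) : ZMod 5) := by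
          push_cast
          rw [← ZMod.natCast_mod p 5, ← ZMod.natCast_mod (p % 20) 5,
            Nat.mod_mod_of_dvd p (by norm_num : 5 ∣ 20)]
        rw [hc]
        rcases hm with h' | h' | h' | h' <;> rw [h']
        · refine ⟨1, ?_⟩; norm_num
        · refine ⟨3, ?_⟩; norm_num
        · refine ⟨1, ?_⟩; rw [← ZMod.natCast_mod 11 5]; norm_num
        · refine ⟨2, ?_⟩; rw [← ZMod.natCast_mod 19 5]; norm_num
      have hleg5 : legendreSym 5 (p : ℤ) = 1 := (legendreSym.eq_one_iff 5 hpz).mpr hps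
      have hleg : legendreSym p 5 = 1 := by
        have h' := legendreSym.quadratic_reciprocity_one_mod_four (p := 5) (q := p)
          (by norm_num) hp2
        rw [show ((5 : ℕ) : ℤ) = (5 : ℤ) by norm_num] at h'
        rw [h', hleg5]
      exact (legendreSym.eq_one_iff p h50).mp hleg
    obtain ⟨t, ht⟩ := hsq
    obtain ⟨X, Y, hXY, hX2, hY2, hne⟩ := thue p hp1 t
    have hdvd : (p : ℤ) ∣ X ^ 2 - 5 * Y ^ 2 := by
      rw [← ZMod.intCast_zmod_eq_zero_iff_dvd]
      push_cast
      rw [hXY]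
      push_cast at ht
      rw [show (5 : ZMod p) = t * t from ht]
      ring
    obtain ⟨k, hk⟩ := hdvd
    have hY0 : Y ≠ 0 := by
      rintro rfl
      have hX0 : X ≠ 0 := fun h' => hne ⟨h', rfl⟩
      have hpX : (p : ℤ) ∣ X := by
        rw [← ZMod.intCast_zmod_eq_zero_iff_dvd, hXY]
        push_cast
        ring
      have : (p : ℤ) ≤ |X| := Int.le_of_dvd (abs_pos.mpr hX0) ((dvd_abs _ _).mpr hpX)
      nlinarith [sq_abs X, abs_nonneg X]
    have hXlt : X ^ 2 < (p : ℤ) :=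
      lt_of_le_of_ne hX2 (sq_ne_prime p hp X)
    have hYlt : Y ^ 2 < (p : ℤ) :=
      lt_of_le_of_ne hY2 (sq_ne_prime p hp Y)
    have hppos : (0 : ℤ) < p := by exact_mod_cast hp.pos
    have hklt : k < 1 := by nlinarith [sq_nonneg Y]
    have hkgt : -5 < k := by nlinarith [sq_nonneg X]
    have hk0 : k ≠ 0 := by
      rintro rfl
      rw [mul_zero, sub_eq_zero] at hk
      exact hY0 (no_sqrt5 X Y hk)
    -- now k ∈ {-4, -3, -2, -1}
    have hkcases : k = -4 ∨ k = -3 ∨ k = -2 ∨ k = -1 := by omega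
    rcases hkcases with rfl | rfl | rfl | rfl
    · -- k = -4 : descent in the half-integer ring
      have hpar : (2 : ℤ) ∣ X - Y := by
        have h0 : ((X - Y : ℤ) : ZMod 2) = 0 := by
          have h1 : ((X ^ 2 - 5 * Y ^ 2 : ℤ) : ZMod 2) = 0 := by
            rw [hk, ZMod.intCast_zmod_eq_zero_iff_dvd]
            exact ⟨-2 * p, by ring⟩
          push_cast at h1 ⊢
          have hd : ∀ x y : ZMod 2, x ^ 2 - 5 * y ^ 2 = 0 → x - y = 0 := by decide
          exact hd _ _ h1
        rwa [ZMod.intCast_zmod_eq_zero_iff_dvd] at h0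
      obtain ⟨d, hd⟩ := hpar
      rcases Int.even_or_odd Y with ⟨m, hmY⟩ | ⟨m, hmY⟩
      · -- X, Y both even
        refine ⟨2 * (m + d) + 5 * m, (m + d) + 2 * m, ?_⟩
        have hX : X = 2 * m + 2 * d := by omega
        rw [hX, hmY] at hk
        have h4 : (4 : ℤ) * ((m + d) ^ 2 - 5 * m ^ 2) = 4 * (-(p : ℤ)) := by
          linear_combination hk
        have hq := mul_left_cancel₀ (by norm_num : (4 : ℤ) ≠ 0) h4
        linear_combination hq
      · -- X, Y both odd
        rcases Int.even_or_odd d with ⟨e, he⟩ | ⟨e, he⟩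
        · -- d even : 4 ∣ X + 3Y, use c = 2m+e+1, X = 4c - 3Y
          refine ⟨11 * (2 * m + e + 1) - 2 * Y, 5 * (2 * m + e + 1) - Y, ?_⟩
          have hX : X = 4 * (2 * m + e + 1) - 3 * Y := by omega
          rw [hX] at hk
          have h4 : (4 : ℤ) * (4 * (2 * m + e + 1) ^ 2 - 6 * (2 * m + e + 1) * Y + Y ^ 2)
              = 4 * (-(p : ℤ)) := by linear_combination hk
          have hq := mul_left_cancel₀ (by norm_num : (4 : ℤ) ≠ 0) h4
          linear_combination hq
        · -- d odd : 4 ∣ X + Y, use c = m+e+1, X = 4c - Y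
          refine ⟨(m + e + 1) + Y, (m + e + 1), ?_⟩
          have hX : X = 4 * (m + e + 1) - Y := by omega
          rw [hX] at hk
          have h4 : (4 : ℤ) * (4 * (m + e + 1) ^ 2 - 2 * (m + e + 1) * Y - Y ^ 2)
              = 4 * (-(p : ℤ)) := by linear_combination hk
          have hq := mul_left_cancel₀ (by norm_num : (4 : ℤ) ≠ 0) h4
          linear_combination hq
    · -- k = -3 : impossible
      exfalso
      have h1 : ((X ^ 2 - 5 * Y ^ 2 : ℤ) : ZMod 3) = 0 := by
        rw [hk, ZMod.intCast_zmod_eq_zero_iff_dvd]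
        exact ⟨-p, by ring⟩
      push_cast at h1
      have hd : ∀ x y : ZMod 3, x ^ 2 - 5 * y ^ 2 = 0 → x = 0 ∧ y = 0 := by decide
      obtain ⟨hx0, hy0⟩ := hd _ _ h1
      rw [show ((X : ZMod 3) = 0) ↔ ((X : ℤ) : ZMod 3) = 0 from Iff.rfl,
        ZMod.intCast_zmod_eq_zero_iff_dvd] at hx0
      rw [show ((Y : ZMod 3) = 0) ↔ ((Y : ℤ) : ZMod 3) = 0 from Iff.rfl,
        ZMod.intCast_zmod_eq_zero_iff_dvd] at hy0
      obtain ⟨x', hx'⟩ := hx0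
      obtain ⟨y', hy'⟩ := hy0
      have h3p : (3 : ℤ) ∣ (p : ℤ) := by
        refine ⟨-x' ^ 2 + 5 * y' ^ 2, ?_⟩
        rw [hx', hy'] at hk
        push_cast at hk
        linarith [hk]
      have h3pn : (3 : ℕ) ∣ p := by exact_mod_cast h3p
      exact hp3 ((Nat.prime_dvd_prime_iff_eq (by norm_num) hp).mp h3pn).symm
    · -- k = -2 : impossible mod 8
      exfalso
      have h1 : ((X ^ 2 - 5 * Y ^ 2 : ℤ) : ZMod 8) = (p : ZMod 8) * (-2) := by
        rw [hk]; push_cast; ring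
      push_cast at h1
      have hp8 : (p : ZMod 8) = 1 ∨ (p : ZMod 8) = 3 ∨ (p : ZMod 8) = 5 ∨
          (p : ZMod 8) = 7 := by
        have h8 : p % 8 = 1 ∨ p % 8 = 3 ∨ p % 8 = 5 ∨ p % 8 = 7 := by omega
        rw [← ZMod.natCast_mod p 8]
        rcases h8 with h' | h' | h' | h' <;> rw [h'] <;> simp
      have hd : ∀ q x y : ZMod 8, (q = 1 ∨ q = 3 ∨ q = 5 ∨ q = 7) →
          x ^ 2 - 5 * y ^ 2 ≠ q * (-2) := by decide
      exact hd _ _ _ hp8 h1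
    · -- k = -1
      refine ⟨2 * X + 5 * Y, X + 2 * Y, ?_⟩
      linear_combination hk
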